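/- Let k ≥ 2 and consider the (2k+4)-dimensional vector space g' with basis E_0,...,E_k, F_0,...,F_k, N, X and bracket relations [E_i, F_{k-i}] = (-1)^i N for 0 ≤ i ≤ k, [X,E_i] = E_{i+1} and [X,F_i] = F_{i+1} for 0 ≤ i ≤ k-1, with all other brackets of basis elements zero. Then g' is a Lie algebra (the Jacobi identity holds). -/

import Mathlib

/-- Structure constants (in one direction) for the algebra `g'` with basis
`E_0, …, E_k, F_0, …, F_k, N, X`, encoded on `Fin (2k+4)` as:
`i ↦ E_i` for `0 ≤ i ≤ k`, `k+1+j ↦ F_j` for `0 ≤ j ≤ k`, `2k+2 ↦ N`, `2k+3 ↦ X`.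
The relations are `[E_i, F_{k-i}] = (-1)^i N` (`0 ≤ i ≤ k`), `[X,E_i] = E_{i+1}` and
`[X,F_i] = F_{i+1}` (`0 ≤ i ≤ k-1`). -/
def gRel (k : ℕ) (i j l : Fin (2 * k + 4)) : ℝ :=
  if i.val ≤ k ∧ j.val = 2 * k + 1 - i.val ∧ l.val = 2 * k + 2 then (-1 : ℝ) ^ i.val
  else if i.val = 2 * k + 3 ∧ j.val ≤ k - 1 ∧ l.val = j.val + 1 then 1
  else if i.val = 2 * k + 3 ∧ k + 1 ≤ j.val ∧ j.val ≤ 2 * k ∧ l.val = j.val + 1 then 1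
  else 0

/-- The skew-symmetrized structure constants of `g'`. -/
def gC (k : ℕ) (i j l : Fin (2 * k + 4)) : ℝ := gRel k i j l - gRel k j i l

/-- The bilinear skew-symmetric bracket of `g'` on `ℝ^{2k+4}`. -/
def gBracket (k : ℕ) (f g : Fin (2 * k + 4) → ℝ) : Fin (2 * k + 4) → ℝ :=
  fun l => ∑ i : Fin (2 * k + 4), ∑ j : Fin (2 * k + 4), f i * g j * gC k i j l

/-- the form `ω` with `ω(E_i, F_{k-i}) = (-1)^i` -/
def omg (k : ℕ) (f g : Fin (2 * k + 4) → ℝ) : ℝ :=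
  ∑ i : Fin (2 * k + 4),
    if i.val ≤ k then (-1 : ℝ) ^ i.val * f i * g ⟨2 * k + 1 - i.val, by omega⟩ else 0

/-- the shift operator `ad X` -/
def Dm (k : ℕ) (f : Fin (2 * k + 4) → ℝ) : Fin (2 * k + 4) → ℝ :=
  fun l => if (1 ≤ l.val ∧ l.val ≤ k) ∨ (k + 2 ≤ l.val ∧ l.val ≤ 2 * k + 1)
    then f ⟨l.val - 1, by omega⟩ else 0

lemma fcongr {n : ℕ} (f : Fin n → ℝ) {x y : ℕ} (hx : x < n) (hy : y < n) (h : x = y) :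
    f ⟨x, hx⟩ = f ⟨y, hy⟩ := by subst h; rfl

lemma Dm_mk (k : ℕ) (f : Fin (2 * k + 4) → ℝ) (t : ℕ) (ht : t < 2 * k + 4)
    (h : (1 ≤ t ∧ t ≤ k) ∨ (k + 2 ≤ t ∧ t ≤ 2 * k + 1)) :
    Dm k f ⟨t, ht⟩ = f ⟨t - 1, by omega⟩ := if_pos h

lemma Dm_mk0 (k : ℕ) (f : Fin (2 * k + 4) → ℝ) (t : ℕ) (ht : t < 2 * k + 4)
    (h : ¬((1 ≤ t ∧ t ≤ k) ∨ (k + 2 ≤ t ∧ t ≤ 2 * k + 1))) :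
    Dm k f ⟨t, ht⟩ = 0 := if_neg h

lemma sum_if_eq {n : ℕ} (F : Fin n → ℝ) (t : ℕ) (ht : t < n) :
    (∑ j : Fin n, if j.val = t then F j else 0) = F ⟨t, ht⟩ := by
  rw [Finset.sum_eq_single (⟨t, ht⟩ : Fin n)]
  · simp
  · intro b _ hb
    exact if_neg (fun hb' => hb (Fin.ext hb'))
  · intro hmem; exact absurd (Finset.mem_univ _) hmem

lemma P_eq (k : ℕ) (hk : 2 ≤ k) (f g : Fin (2 * k + 4) → ℝ) (l : Fin (2 * k + 4)) :
    (∑ i : Fin (2 * k + 4), ∑ j : Fin (2 * k + 4), f i * g j * gRel k i j l)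
      = (if l.val = 2 * k + 2 then omg k f g else 0)
        + f ⟨2 * k + 3, by omega⟩ * Dm k g l := by
  have step : ∀ i : Fin (2 * k + 4),
      (∑ j : Fin (2 * k + 4), f i * g j * gRel k i j l)
        = (if i.val ≤ k then
            (if l.val = 2 * k + 2 then
              (-1 : ℝ) ^ i.val * f i * g ⟨2 * k + 1 - i.val, by omega⟩ else 0) else 0)
          + (if i.val = 2 * k + 3 then f i * Dm k g l else 0) := by
    intro i
    by_cases hi1 : i.val ≤ k
    · rw [if_pos hi1, if_neg (show ¬(i.val = 2 * k + 3) from by omega), add_zero]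
      by_cases hl : l.val = 2 * k + 2
      · rw [if_pos hl,
          ← sum_if_eq (fun j => (-1 : ℝ) ^ i.val * f i * g j) (2 * k + 1 - i.val) (by omega)]
        refine Finset.sum_congr rfl (fun j _ => ?_)
        unfold gRel
        by_cases hj : j.val = 2 * k + 1 - i.val
        · rw [if_pos ⟨hi1, hj, hl⟩, if_pos hj]; ring
        · rw [if_neg (by tauto), if_neg (by omega), if_neg (by omega), if_neg hj, mul_zero]
      · rw [if_neg hl]
        refine Finset.sum_eq_zero (fun j _ => ?_)
        unfold gRel
        rw [if_neg (by tauto), if_neg (by omega), if_neg (by omega), mul_zero]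
    · by_cases hi2 : i.val = 2 * k + 3
      · rw [if_neg hi1, if_pos hi2, zero_add]
        by_cases hd : (1 ≤ l.val ∧ l.val ≤ k) ∨ (k + 2 ≤ l.val ∧ l.val ≤ 2 * k + 1)
        · rw [show Dm k g l = g ⟨l.val - 1, by omega⟩ from if_pos hd,
            ← sum_if_eq (fun j => f i * g j) (l.val - 1) (by omega)]
          refine Finset.sum_congr rfl (fun j _ => ?_)
          unfold gRel
          by_cases hj : j.val = l.val - 1
          · rcases hd with hd | hd
            · rw [if_neg (by omega), if_pos ⟨hi2, by omega, by omega⟩, if_pos hj]; ring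
            · rw [if_neg (by omega), if_neg (by omega),
                if_pos ⟨hi2, by omega, by omega, by omega⟩, if_pos hj]; ring
          · rw [if_neg (by omega), if_neg (by omega), if_neg (by omega), if_neg hj, mul_zero]
        · rw [show Dm k g l = 0 from if_neg hd, mul_zero]
          refine Finset.sum_eq_zero (fun j _ => ?_)
          unfold gRel
          rw [if_neg (by omega), if_neg (by omega), if_neg (by omega), mul_zero]
      · rw [if_neg hi1, if_neg hi2, add_zero]
        refine Finset.sum_eq_zero (fun j _ => ?_)
        unfold gRel
        rw [if_neg (by omega), if_neg (by omega), if_neg (by omega), mul_zero]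
  rw [Finset.sum_congr rfl (fun i _ => step i), Finset.sum_add_distrib]
  congr 1
  · by_cases hl : l.val = 2 * k + 2
    · rw [if_pos hl]
      refine Finset.sum_congr rfl (fun i _ => ?_)
      by_cases hi : i.val ≤ k
      · rw [if_pos hi, if_pos hi, if_pos hl]
      · rw [if_neg hi, if_neg hi]
    · rw [if_neg hl]
      refine Finset.sum_eq_zero (fun i _ => ?_)
      by_cases hi : i.val ≤ k
      · rw [if_pos hi, if_neg hl]
      · rw [if_neg hi]
  · exact sum_if_eq (fun i => f i * Dm k g l) (2 * k + 3) (by omega)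


lemma gBracket_eq (k : ℕ) (hk : 2 ≤ k) (f g : Fin (2 * k + 4) → ℝ) (l : Fin (2 * k + 4)) :
    gBracket k f g l
      = (if l.val = 2 * k + 2 then omg k f g - omg k g f else 0)
        + f ⟨2 * k + 3, by omega⟩ * Dm k g l - g ⟨2 * k + 3, by omega⟩ * Dm k f l := by
  unfold gBracket gC
  have e1 : ∀ i j : Fin (2 * k + 4),
      f i * g j * (gRel k i j l - gRel k j i l)
        = f i * g j * gRel k i j l - g j * f i * gRel k j i l := fun i j => by ring
  simp only [e1]
  rw [Finset.sum_congr rfl (fun i _ => Finset.sum_sub_distrib _ _), Finset.sum_sub_distrib]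
  have h2 : (∑ i : Fin (2 * k + 4), ∑ j : Fin (2 * k + 4), g j * f i * gRel k j i l)
      = ∑ i : Fin (2 * k + 4), ∑ j : Fin (2 * k + 4), g i * f j * gRel k i j l :=
    Finset.sum_comm
  rw [h2, P_eq k hk f g l, P_eq k hk g f l]
  split_ifs <;> ring

lemma bracket_X (k : ℕ) (hk : 2 ≤ k) (f g : Fin (2 * k + 4) → ℝ) :
    gBracket k f g ⟨2 * k + 3, by omega⟩ = 0 := by
  rw [gBracket_eq k hk, if_neg (show ¬((2 * k + 3 : ℕ) = 2 * k + 2) from by omega),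
    Dm_mk0 k g (2 * k + 3) (by omega) (by omega),
    Dm_mk0 k f (2 * k + 3) (by omega) (by omega)]
  ring

lemma Dm_bracket (k : ℕ) (hk : 2 ≤ k) (g h : Fin (2 * k + 4) → ℝ) (l : Fin (2 * k + 4)) :
    Dm k (gBracket k g h) l
      = g ⟨2 * k + 3, by omega⟩ * Dm k (Dm k h) l
        - h ⟨2 * k + 3, by omega⟩ * Dm k (Dm k g) l := by
  by_cases hd : (1 ≤ l.val ∧ l.val ≤ k) ∨ (k + 2 ≤ l.val ∧ l.val ≤ 2 * k + 1)
  · rw [show Dm k (gBracket k g h) l = gBracket k g h ⟨l.val - 1, by omega⟩ from if_pos hd,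
      show Dm k (Dm k h) l = Dm k h ⟨l.val - 1, by omega⟩ from if_pos hd,
      show Dm k (Dm k g) l = Dm k g ⟨l.val - 1, by omega⟩ from if_pos hd,
      gBracket_eq k hk, if_neg (show ¬(l.val - 1 = 2 * k + 2) from by omega)]
    ring
  · rw [show Dm k (gBracket k g h) l = 0 from if_neg hd,
      show Dm k (Dm k h) l = 0 from if_neg hd,
      show Dm k (Dm k g) l = 0 from if_neg hd]
    ring

lemma omg_bracket_right (k : ℕ) (hk : 2 ≤ k) (f g h : Fin (2 * k + 4) → ℝ) :
    omg k f (gBracket k g h)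
      = g ⟨2 * k + 3, by omega⟩ * omg k f (Dm k h)
        - h ⟨2 * k + 3, by omega⟩ * omg k f (Dm k g) := by
  unfold omg
  rw [Finset.mul_sum, Finset.mul_sum, ← Finset.sum_sub_distrib]
  refine Finset.sum_congr rfl (fun i _ => ?_)
  by_cases hi : i.val ≤ k
  · rw [if_pos hi, if_pos hi, if_pos hi,
      gBracket_eq k hk g h ⟨2 * k + 1 - i.val, by omega⟩,
      if_neg (show ¬(2 * k + 1 - i.val = 2 * k + 2) from by omega)]
    ring
  · rw [if_neg hi, if_neg hi, if_neg hi]; ring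

lemma omg_bracket_left (k : ℕ) (hk : 2 ≤ k) (f g h : Fin (2 * k + 4) → ℝ) :
    omg k (gBracket k g h) f
      = g ⟨2 * k + 3, by omega⟩ * omg k (Dm k h) f
        - h ⟨2 * k + 3, by omega⟩ * omg k (Dm k g) f := by
  unfold omg
  rw [Finset.mul_sum, Finset.mul_sum, ← Finset.sum_sub_distrib]
  refine Finset.sum_congr rfl (fun i _ => ?_)
  by_cases hi : i.val ≤ k
  · rw [if_pos hi, if_pos hi, if_pos hi,
      gBracket_eq k hk g h i,
      if_neg (show ¬(i.val = 2 * k + 2) from by omega)]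
    ring
  · rw [if_neg hi, if_neg hi, if_neg hi]; ring

def auxF (k : ℕ) (a b : Fin (2 * k + 4) → ℝ) (m : ℕ) : ℝ :=
  if h : m + 1 ≤ k then
    (-1 : ℝ) ^ m * a ⟨m, by omega⟩ * b ⟨2 * k - m, by omega⟩ else 0

def auxG (k : ℕ) (a b : Fin (2 * k + 4) → ℝ) (m : ℕ) : ℝ :=
  if h : 1 ≤ m ∧ m ≤ k then
    (-1 : ℝ) ^ m * a ⟨m - 1, by omega⟩ * b ⟨2 * k + 1 - m, by omega⟩ else 0

lemma omg_Dm (k : ℕ) (hk : 2 ≤ k) (a b : Fin (2 * k + 4) → ℝ) :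
    omg k a (Dm k b) = - omg k (Dm k a) b := by
  have h1 : omg k a (Dm k b) = ∑ m ∈ Finset.range (2 * k + 4), auxF k a b m := by
    rw [omg, ← Fin.sum_univ_eq_sum_range (auxF k a b) (2 * k + 4)]
    refine Finset.sum_congr rfl (fun i _ => ?_)
    unfold auxF
    by_cases h : i.val + 1 ≤ k
    · rw [dif_pos h, if_pos (show i.val ≤ k from by omega),
        Dm_mk k b (2 * k + 1 - i.val) (by omega) (by omega),
        fcongr b (by omega) (by omega) (show 2 * k + 1 - i.val - 1 = 2 * k - i.val from by omega),
        fcongr a i.isLt (by omega) rfl]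
    · rw [dif_neg h]
      by_cases hi : i.val ≤ k
      · rw [if_pos hi, Dm_mk0 k b (2 * k + 1 - i.val) (by omega) (by omega), mul_zero]
      · rw [if_neg hi]
  have h2 : omg k (Dm k a) b = ∑ m ∈ Finset.range (2 * k + 4), auxG k a b m := by
    rw [omg, ← Fin.sum_univ_eq_sum_range (auxG k a b) (2 * k + 4)]
    refine Finset.sum_congr rfl (fun i _ => ?_)
    unfold auxG
    by_cases h : 1 ≤ i.val ∧ i.val ≤ k
    · rw [dif_pos h, if_pos h.2,
        show Dm k a i = a ⟨i.val - 1, by omega⟩ from if_pos (by omega)]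
    · rw [dif_neg h]
      by_cases hi : i.val ≤ k
      · rw [if_pos hi, show Dm k a i = 0 from if_neg (by omega)]
        ring
      · rw [if_neg hi]
  have h3 : ∀ m, auxF k a b m = - auxG k a b (m + 1) := by
    intro m
    unfold auxF auxG
    by_cases h : m + 1 ≤ k
    · rw [dif_pos h, dif_pos (⟨by omega, h⟩ : 1 ≤ m + 1 ∧ m + 1 ≤ k),
        fcongr a (by omega) (by omega) (show m + 1 - 1 = m from by omega),
        fcongr b (by omega) (by omega) (show 2 * k + 1 - (m + 1) = 2 * k - m from by omega)]
      ring
    · rw [dif_neg h, dif_neg (by omega)]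
      ring
  have hF : ∑ m ∈ Finset.range (2 * k + 4), auxF k a b m
      = ∑ m ∈ Finset.range (2 * k + 3), auxF k a b m := by
    rw [show (2 * k + 4) = (2 * k + 3) + 1 from rfl, Finset.sum_range_succ,
      show auxF k a b (2 * k + 3) = 0 from dif_neg (by omega), add_zero]
  have hG : ∑ m ∈ Finset.range (2 * k + 4), auxG k a b m
      = ∑ m ∈ Finset.range (2 * k + 3), auxG k a b (m + 1) := by
    rw [show (2 * k + 4) = (2 * k + 3) + 1 from rfl, Finset.sum_range_succ',
      show auxG k a b 0 = 0 from dif_neg (by omega), add_zero]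
  rw [h1, h2, hF, hG, Finset.sum_congr rfl (fun m _ => h3 m), ← Finset.sum_neg_distrib]

/-- For `k ≥ 2`, the bracket on the `(2k+4)`-dimensional space `g'` with basis
`E_0, …, E_k, F_0, …, F_k, N, X` and relations `[E_i,F_{k-i}] = (-1)^i N`,
`[X,E_i] = E_{i+1}`, `[X,F_i] = F_{i+1}` (all other brackets of basis elements zero)
satisfies the Jacobi identity, hence defines a Lie algebra. -/
theorem gBracket_jacobi (k : ℕ) (hk : 2 ≤ k) (f g h : Fin (2 * k + 4) → ℝ) :
    gBracket k f (gBracket k g h) + gBracket k g (gBracket k h f) +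
      gBracket k h (gBracket k f g) = 0 := by
  funext l
  simp only [Pi.add_apply, Pi.zero_apply]
  rw [gBracket_eq k hk f (gBracket k g h) l, gBracket_eq k hk g (gBracket k h f) l,
    gBracket_eq k hk h (gBracket k f g) l,
    bracket_X k hk g h, bracket_X k hk h f, bracket_X k hk f g,
    Dm_bracket k hk g h l, Dm_bracket k hk h f l, Dm_bracket k hk f g l,
    omg_bracket_right k hk f g h, omg_bracket_right k hk g h f, omg_bracket_right k hk h f g,
    omg_bracket_left k hk f g h, omg_bracket_left k hk g h f, omg_bracket_left k hk h f g,
    omg_Dm k hk f h, omg_Dm k hk f g, omg_Dm k hk g f, omg_Dm k hk g h,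
    omg_Dm k hk h g, omg_Dm k hk h f]
  split_ifs <;> ring
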